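/- For every positive natural number n, the ordinal ω^n (ordinal exponentiation) with the order topology is a scattered space of Cantor–Bendixson rank exactly n: its n-th Cantor–Bendixson derivative is empty while its (n−1)-st is not. -/

import Mathlib

open TopologicalSpace MeasureTheory Topology

/-- A space is *homogeneous* if its homeomorphism group acts transitively. -/
def HomogeneousSpace (X : Type*) [TopologicalSpace X] : Prop :=
  ∀ x y : X, ∃ h : X ≃ₜ X, h x = y

/-- A subset is a *homogeneous subspace* if it is homogeneous in the subspace topology. -/
def HomogeneousSubspace {X : Type*} [TopologicalSpace X] (S : Set X) : Prop :=
  ∀ x y : S, ∃ h : ↥S ≃ₜ ↥S, h x = y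

/-- A space is *zero-dimensional* if the clopen sets form a base. -/
def ZeroDimensionalSpace (X : Type*) [TopologicalSpace X] : Prop :=
  IsTopologicalBasis {s : Set X | IsClopen s}

/-- A space is *analytic* if it embeds onto an analytic subset of some Polish space. -/
def AnalyticSpace (X : Type*) [tX : TopologicalSpace X] : Prop :=
  ∃ (Z : Type) (tZ : TopologicalSpace Z), @PolishSpace Z tZ ∧
    ∃ j : X → Z, @IsEmbedding X Z tX tZ j ∧ @AnalyticSet Z tZ (Set.range j)

/-- A space is *coanalytic* if it embeds onto the complement of an analytic subset of some
Polish space. -/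
def CoanalyticSpace (X : Type*) [tX : TopologicalSpace X] : Prop :=
  ∃ (Z : Type) (tZ : TopologicalSpace Z), @PolishSpace Z tZ ∧
    ∃ j : X → Z, @IsEmbedding X Z tX tZ j ∧ @AnalyticSet Z tZ (Set.range j)ᶜ

/-- A space is *Borel* if it embeds onto a Borel subset of some Polish space. -/
def BorelSpacePaper (X : Type*) [tX : TopologicalSpace X] : Prop :=
  ∃ (Z : Type) (tZ : TopologicalSpace Z), @PolishSpace Z tZ ∧
    ∃ j : X → Z, @IsEmbedding X Z tX tZ j ∧ @MeasurableSet Z (@borel Z tZ) (Set.range j)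

/-- `A ∈ Σ¹₁(X)`: for some embedding `j` of `X` into a Polish space `Z`, `j '' A` is the
trace on `j '' X` of an analytic subset of `Z`. -/
def RelativelyAnalytic {X : Type*} [tX : TopologicalSpace X] (A : Set X) : Prop :=
  ∃ (Z : Type) (tZ : TopologicalSpace Z), @PolishSpace Z tZ ∧
    ∃ j : X → Z, @IsEmbedding X Z tX tZ j ∧
      ∃ A' : Set Z, @AnalyticSet Z tZ A' ∧ j '' A = A' ∩ Set.range j

/-- A subset of a space is `Σ¹₂` if it is a continuous image of a coanalytic subset of a
Polish space. -/
def Sigma12Set {Z : Type*} [tZ : TopologicalSpace Z] (s : Set Z) : Prop :=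
  ∃ (W : Type) (tW : TopologicalSpace W), @PolishSpace W tW ∧
    ∃ (C : Set W) (f : W → Z), @AnalyticSet W tW Cᶜ ∧ @ContinuousOn W Z tW tZ f C ∧ f '' C = s

/-- `A ∈ Δ¹₂(X)`: for some embedding `j` of `X` into a Polish space `Z`, both `j '' A` and
`j '' Aᶜ` are traces on `j '' X` of `Σ¹₂` subsets of `Z`. -/
def RelativelyDelta12 {X : Type*} [tX : TopologicalSpace X] (A : Set X) : Prop :=
  ∃ (Z : Type) (tZ : TopologicalSpace Z), @PolishSpace Z tZ ∧
    ∃ j : X → Z, @IsEmbedding X Z tX tZ j ∧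
      (∃ A' : Set Z, @Sigma12Set Z tZ A' ∧ j '' A = A' ∩ Set.range j) ∧
      (∃ B' : Set Z, @Sigma12Set Z tZ B' ∧ j '' Aᶜ = B' ∩ Set.range j)

/-- A space is *meager* if it is a meager subset of itself. -/
def MeagerSpace (X : Type*) [TopologicalSpace X] : Prop :=
  IsMeagre (Set.univ : Set X)

/-- A space is *Baire* if no non-empty open subset of it is meager (the definition used in
the paper). -/
def PaperBaireSpace (X : Type*) [TopologicalSpace X] : Prop :=
  ∀ U : Set X, IsOpen U → U.Nonempty → ¬ IsMeagre U

/-- A space is *nowhere countable* if it is non-empty and no non-empty open subset of it is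
countable. -/
def NowhereCountable (X : Type*) [TopologicalSpace X] : Prop :=
  Nonempty X ∧ ∀ U : Set X, IsOpen U → U.Nonempty → ¬ U.Countable

/-- The iterated Cantor–Bendixson derivative of a space: `cbDeriv X 0 = X`,
`cbDeriv X (ξ+1)` is `cbDeriv X ξ` minus its isolated points, and intersections are taken
at limit stages. -/
noncomputable def cbDeriv (X : Type*) [TopologicalSpace X] (o : Ordinal.{0}) : Set X :=
  Ordinal.limitRecOn o Set.univ
    (fun _ ih => {x ∈ ih | x ∈ closure (ih \ {x})})
    (fun o _ ih => ⋂ (p : Set.Iio o), ih p.1 p.2)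

/-- A space is *scattered* if some iterated Cantor–Bendixson derivative of it is empty. -/
def ScatteredSpace (X : Type*) [TopologicalSpace X] : Prop :=
  ∃ o : Ordinal.{0}, cbDeriv X o = ∅

/-- A space is *n-discrete* if it is the union of `n` discrete subspaces. -/
def NDiscrete (n : ℕ) (X : Type*) [TopologicalSpace X] : Prop :=
  ∃ D : Fin n → Set X, (∀ k, DiscreteTopology ↥(D k)) ∧ ⋃ k, D k = Set.univ

/-- A space is *n-homogeneous* if it is the union of `n` homogeneous subspaces. -/
def NHomogeneous (n : ℕ) (X : Type*) [TopologicalSpace X] : Prop :=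
  ∃ Y : Fin n → Set X, (∀ k, HomogeneousSubspace (Y k)) ∧ ⋃ k, Y k = Set.univ

/-- A space is *σ-homogeneous* if it is the union of countably many homogeneous
subspaces. -/
def SigmaHomogeneous (X : Type*) [TopologicalSpace X] : Prop :=
  ∃ Y : ℕ → Set X, (∀ n, HomogeneousSubspace (Y n)) ∧ ⋃ n, Y n = Set.univ

/-- An `Fσ` subset: a countable union of closed sets. -/
def IsFsigma {X : Type*} [TopologicalSpace X] (s : Set X) : Prop :=
  ∃ F : ℕ → Set X, (∀ n, IsClosed (F n)) ∧ s = ⋃ n, F n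


section CBAux

open Ordinal Set

lemma cbDeriv_zero' (X : Type*) [TopologicalSpace X] : cbDeriv X 0 = Set.univ := by
  rw [cbDeriv, Ordinal.limitRecOn_zero]

lemma cbDeriv_succ' (X : Type*) [TopologicalSpace X] (o : Ordinal) :
    cbDeriv X (o + 1) = {x ∈ cbDeriv X o | x ∈ closure (cbDeriv X o \ {x})} := by
  rw [cbDeriv, Ordinal.add_one_eq_succ, Ordinal.limitRecOn_succ]
  rfl

lemma ord_mem_closure_diff_singleton {A : Set Ordinal} {x : Ordinal} :
    x ∈ closure (A \ {x}) ↔ x ≠ 0 ∧ ∀ a < x, ∃ b ∈ A, a < b ∧ b < x := by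
  constructor
  · intro h
    refine ⟨?_, ?_⟩
    · rintro rfl
      obtain ⟨b, hbU, hbA, hbx⟩ := mem_closure_iff.1 h (Set.Iio 1) isOpen_Iio (by simp)
      exact hbx (by simpa using Ordinal.lt_one_iff_zero.1 hbU)
    · intro a ha
      obtain ⟨b, hbU, hbA, hbx⟩ := mem_closure_iff.1 h (Set.Ioi a ∩ Set.Iio (Order.succ x))
        (isOpen_Ioi.inter isOpen_Iio) ⟨ha, Order.lt_succ x⟩
      refine ⟨b, hbA, hbU.1, lt_of_le_of_ne (Order.lt_succ_iff.1 hbU.2) ?_⟩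
      intro hbe; exact hbx (by simpa using hbe)
  · rintro ⟨h0, h⟩
    have hl : Order.IsSuccLimit x := by
      rcases Ordinal.zero_or_succ_or_isSuccLimit x with rfl | ⟨r, hr⟩ | hl
      · exact absurd rfl h0
      · subst hr
        obtain ⟨b, _, hrb, hbs⟩ := h r (Order.lt_succ r)
        exact absurd hbs (not_lt.2 (Order.succ_le_of_lt hrb))
      · exact hl
    rw [mem_closure_iff]
    intro U hU hxU
    obtain ⟨a, hax, hIoo⟩ := Ordinal.isOpen_iff.1 hU x hxU hl
    obtain ⟨b, hbA, hab, hbx⟩ := h a hax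
    exact ⟨b, hIoo ⟨hab, hbx⟩, hbA, by simpa using hbx.ne⟩

lemma dvd_succ_of_cond {k x : Ordinal} (hxd : Ordinal.omega0 ^ k ∣ x) (hx0 : x ≠ 0)
    (h : ∀ a < x, ∃ b, Ordinal.omega0 ^ k ∣ b ∧ a < b ∧ b < x) :
    Ordinal.omega0 ^ (k + 1) ∣ x := by
  obtain ⟨q, rfl⟩ := hxd
  have hp : (0 : Ordinal) < Ordinal.omega0 ^ k := Ordinal.opow_pos _ Ordinal.omega0_pos
  rcases Ordinal.zero_or_succ_or_isSuccLimit q with rfl | ⟨r, hr⟩ | hl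
  · exact absurd (mul_zero _) hx0
  · subst hr
    obtain ⟨b, ⟨s, rfl⟩, hab, hbx⟩ := h (Ordinal.omega0 ^ k * r)
      ((mul_lt_mul_iff_right₀ hp).2 (Order.lt_succ r))
    have h1 := (mul_lt_mul_iff_right₀ hp).1 hab
    have h2 := (mul_lt_mul_iff_right₀ hp).1 hbx
    exact absurd h2 (not_lt.2 (Order.succ_le_of_lt h1))
  · obtain ⟨c, hc⟩ := (Ordinal.isSuccLimit_iff_omega0_dvd.1 hl).2
    exact ⟨c, by rw [hc, Ordinal.opow_add, Ordinal.opow_one, mul_assoc]⟩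

lemma cond_of_dvd_succ {k x : Ordinal} (hxd : Ordinal.omega0 ^ (k + 1) ∣ x) (hx0 : x ≠ 0) :
    ∀ a < x, ∃ b, Ordinal.omega0 ^ k ∣ b ∧ a < b ∧ b < x := by
  intro a ha
  obtain ⟨c, rfl⟩ := hxd
  have hp : (0 : Ordinal) < Ordinal.omega0 ^ k := Ordinal.opow_pos _ Ordinal.omega0_pos
  have hc0 : c ≠ 0 := by rintro rfl; exact hx0 (mul_zero _)
  have hx' : Ordinal.omega0 ^ (k + 1) * c = Ordinal.omega0 ^ k * (Ordinal.omega0 * c) := by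
    rw [Ordinal.opow_add, Ordinal.opow_one, mul_assoc]
  refine ⟨Ordinal.omega0 ^ k * Order.succ (a / Ordinal.omega0 ^ k), ⟨_, rfl⟩, ?_, ?_⟩
  · exact Ordinal.lt_mul_succ_div a hp.ne'
  · rw [hx']
    refine (mul_lt_mul_iff_right₀ hp).2 ?_
    have h1 : a / Ordinal.omega0 ^ k < Ordinal.omega0 * c :=
      (Ordinal.div_lt hp.ne').2 (by rw [← hx']; exact ha)
    exact (Ordinal.isSuccLimit_mul_left Ordinal.isSuccLimit_omega0
      (pos_iff_ne_zero.2 hc0)).succ_lt h1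

lemma cbDeriv_omega_pow (n k : ℕ) (hk : 1 ≤ k) :
    cbDeriv ↥(Set.Iio (Ordinal.omega0 ^ (n : Ordinal))) (k : Ordinal) =
      {x : ↥(Set.Iio (Ordinal.omega0 ^ (n : Ordinal))) |
        (x : Ordinal) ≠ 0 ∧ Ordinal.omega0 ^ (k : Ordinal) ∣ (x : Ordinal)} := by
  induction k with
  | zero => omega
  | succ k ih =>
    simp only [Nat.cast_succ]
    rw [cbDeriv_succ']
    rcases Nat.eq_zero_or_pos k with rfl | hk1
    · rw [Nat.cast_zero, cbDeriv_zero']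
      ext x
      simp only [Set.mem_setOf_eq, Set.mem_univ, true_and]
      rw [closure_subtype, Set.image_diff Subtype.coe_injective, Set.image_singleton,
        Set.image_univ, Subtype.range_coe, ord_mem_closure_diff_singleton]
      constructor
      · rintro ⟨h0, h⟩
        refine ⟨h0, dvd_succ_of_cond (k := 0) (by simp) h0 ?_⟩
        intro a ha
        obtain ⟨b, _, hab, hbx⟩ := h a ha
        exact ⟨b, by simp, hab, hbx⟩
      · rintro ⟨h0, hd⟩
        refine ⟨h0, ?_⟩
        intro a ha
        obtain ⟨b, _, hab, hbx⟩ := cond_of_dvd_succ (k := 0) hd h0 a ha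
        exact ⟨b, hbx.trans x.2, hab, hbx⟩
    · rw [ih hk1]
      ext x
      simp only [Set.mem_setOf_eq]
      rw [closure_subtype, Set.image_diff Subtype.coe_injective, Set.image_singleton]
      have himg : (Subtype.val '' {x : ↥(Set.Iio (Ordinal.omega0 ^ (n : Ordinal))) |
            (x : Ordinal) ≠ 0 ∧ Ordinal.omega0 ^ (k : Ordinal) ∣ (x : Ordinal)})
          = {b : Ordinal | (b ≠ 0 ∧ Ordinal.omega0 ^ (k : Ordinal) ∣ b) ∧
              b < Ordinal.omega0 ^ (n : Ordinal)} := by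
        ext b
        constructor
        · rintro ⟨y, hy, rfl⟩; exact ⟨hy, y.2⟩
        · rintro ⟨hb, hbN⟩; exact ⟨⟨b, hbN⟩, hb, rfl⟩
      rw [himg, ord_mem_closure_diff_singleton]
      constructor
      · rintro ⟨⟨h0, hd⟩, _, h⟩
        refine ⟨h0, dvd_succ_of_cond hd h0 ?_⟩
        intro a ha
        obtain ⟨b, ⟨⟨_, hbd⟩, _⟩, hab, hbx⟩ := h a ha
        exact ⟨b, hbd, hab, hbx⟩
      · rintro ⟨h0, hd⟩
        have hdk : Ordinal.omega0 ^ (k : Ordinal) ∣ (x : Ordinal) :=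
          dvd_trans ⟨Ordinal.omega0, by rw [Ordinal.opow_add, Ordinal.opow_one]⟩ hd
        refine ⟨⟨h0, hdk⟩, h0, ?_⟩
        intro a ha
        obtain ⟨b, hbd, hab, hbx⟩ := cond_of_dvd_succ hd h0 a ha
        exact ⟨b, ⟨⟨((zero_le (a := a)).trans_lt hab).ne', hbd⟩, hbx.trans x.2⟩, hab, hbx⟩

end CBAux

/-- For every `0 < n < ω`, the ordinal `ω ^ n` with the order topology is scattered of
Cantor–Bendixson rank exactly `n`: its `n`-th Cantor–Bendixson derivative is empty while
its `(n-1)`-st is not. -/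
theorem omega_pow_n_cantor_bendixson_rank (n : ℕ) (hn : 0 < n) :
    cbDeriv ↥(Set.Iio (Ordinal.omega0 ^ (n : Ordinal))) (n : Ordinal) = ∅ ∧
    cbDeriv ↥(Set.Iio (Ordinal.omega0 ^ (n : Ordinal))) ((n - 1 : ℕ) : Ordinal) ≠ ∅ := by
  constructor
  · rw [cbDeriv_omega_pow n n hn]
    ext x
    simp only [Set.mem_setOf_eq, Set.mem_empty_iff_false, iff_false, not_and]
    intro h0 hd
    exact absurd (Ordinal.le_of_dvd h0 hd) (not_le.2 x.2)
  · rcases eq_or_lt_of_le (Nat.succ_le_of_lt hn) with h1 | h2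
    · intro h
      have hx : ((0 : Ordinal)) ∈ Set.Iio (Ordinal.omega0 ^ (n : Ordinal)) :=
        Ordinal.opow_pos _ Ordinal.omega0_pos
      have : (⟨0, hx⟩ : ↥(Set.Iio (Ordinal.omega0 ^ (n : Ordinal)))) ∈
          cbDeriv ↥(Set.Iio (Ordinal.omega0 ^ (n : Ordinal))) ((n - 1 : ℕ) : Ordinal) := by
        rw [show n - 1 = 0 from by omega, Nat.cast_zero, cbDeriv_zero']
        trivial
      rw [h] at this
      exact this
    · intro h
      rw [cbDeriv_omega_pow n (n - 1) (by omega)] at h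
      have hb : Ordinal.omega0 ^ ((n - 1 : ℕ) : Ordinal) ∈
          Set.Iio (Ordinal.omega0 ^ (n : Ordinal)) :=
        (Ordinal.opow_lt_opow_iff_right Ordinal.one_lt_omega0).2
          (by exact_mod_cast Nat.sub_lt hn one_pos)
      have : (⟨_, hb⟩ : ↥(Set.Iio (Ordinal.omega0 ^ (n : Ordinal)))) ∈
          {x : ↥(Set.Iio (Ordinal.omega0 ^ (n : Ordinal))) |
            (x : Ordinal) ≠ 0 ∧ Ordinal.omega0 ^ ((n - 1 : ℕ) : Ordinal) ∣ (x : Ordinal)} :=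
        ⟨(Ordinal.opow_pos _ Ordinal.omega0_pos).ne', dvd_refl _⟩
      rw [h] at this
      exact this
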